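/- Let t ∈ ℝ³ and T a real 3×3 matrix arising as the Bloch representation of a qubit CPTP channel. Then for every w ∈ ℝ³, ‖t + Tw‖² ≤ 1 − ‖T‖² + ‖w‖², where ‖T‖ is the operator norm of T. -/

import Mathlib

open Matrix Complex
open scoped ComplexOrder

noncomputable section

/-- The Pauli matrices X, Y, Z. -/
def pauli : Fin 3 → Matrix (Fin 2) (Fin 2) ℂ
  | 0 => !![0, 1; 1, 0]
  | 1 => !![0, -I; I, 0]
  | 2 => !![1, 0; 0, -1]

/-- The qubit state (or Hermitian matrix) with Bloch vector `w`: `(1 + w·σ)/2`. -/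
def blochState (w : Fin 3 → ℝ) : Matrix (Fin 2) (Fin 2) ℂ :=
  (1 / 2 : ℂ) • (1 + ∑ i, (w i : ℂ) • pauli i)

/-- The Choi matrix of a linear map on 2×2 matrices. -/
def choi (E : Matrix (Fin 2) (Fin 2) ℂ →ₗ[ℂ] Matrix (Fin 2) (Fin 2) ℂ) :
    Matrix (Fin 2 × Fin 2) (Fin 2 × Fin 2) ℂ :=
  Matrix.of fun p q => E (Matrix.single p.2 q.2 1) p.1 q.1

/-- The operator norm of a real 3×3 matrix, acting on Euclidean space. -/
def opNorm3 (T : Matrix (Fin 3) (Fin 3) ℝ) : ℝ :=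
  ‖Matrix.toEuclideanCLM (𝕜 := ℝ) T‖

lemma blochState_eq (w : Fin 3 → ℝ) :
    blochState w = !![(1 + w 2 : ℂ) / 2, (w 0 - I * w 1) / 2;
                      (w 0 + I * w 1) / 2, (1 - w 2 : ℂ) / 2] := by
  ext i j
  fin_cases i <;> fin_cases j <;>
    simp [blochState, pauli, Fin.sum_univ_three, Matrix.one_apply] <;> ring

lemma cs_aux (x0 x1 x2 Y U V X : ℝ) (h : x0^2 + x1^2 + x2^2 ≤ 1)
    (hX : 0 ≤ X) (hid : Y^2 + 4*U^2 + 4*V^2 = X^2) :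
    0 ≤ X + x2*Y + 2*x0*U + 2*x1*V := by
  nlinarith [sq_nonneg (x2*Y + 2*x0*U + 2*x1*V), sq_nonneg (x0*Y - 2*x2*U),
    sq_nonneg (x1*Y - 2*x2*V), sq_nonneg (x0*2*V - x1*2*U),
    sq_nonneg (X + x2*Y + 2*x0*U + 2*x1*V), sq_nonneg X]

lemma blochState_psd (w : Fin 3 → ℝ) (hw : ∑ i, w i ^ 2 ≤ 1) :
    (blochState w).PosSemidef := by
  rw [blochState_eq]
  refine Matrix.posSemidef_iff_dotProduct_mulVec.mpr ⟨?_, ?_⟩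
  · ext i j
    fin_cases i <;> fin_cases j <;>
      simp [Matrix.conjTranspose_apply, Complex.ext_iff] <;> ring
  · intro z
    rw [Fin.sum_univ_three] at hw
    have hre : 0 ≤ (star z ⬝ᵥ !![(1 + w 2 : ℂ) / 2, (w 0 - I * w 1) / 2;
        (w 0 + I * w 1) / 2, (1 - w 2 : ℂ) / 2] *ᵥ z).re ∧
        (star z ⬝ᵥ !![(1 + w 2 : ℂ) / 2, (w 0 - I * w 1) / 2;
        (w 0 + I * w 1) / 2, (1 - w 2 : ℂ) / 2] *ᵥ z).im = 0 := by
      simp [dotProduct, Matrix.mulVec, Fin.sum_univ_two, Complex.add_re, Complex.add_im,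
        Complex.mul_re, Complex.mul_im, Complex.div_re, Complex.div_im]
      constructor
      · have := cs_aux (w 0) (w 1) (w 2) ((z 0).re^2 + (z 0).im^2 - (z 1).re^2 - (z 1).im^2)
          ((z 0).re*(z 1).re + (z 0).im*(z 1).im) ((z 0).re*(z 1).im - (z 0).im*(z 1).re)
          ((z 0).re^2 + (z 0).im^2 + (z 1).re^2 + (z 1).im^2) hw (by positivity) (by ring)
        nlinarith [this]
      · ring
    rw [Complex.le_def]
    exact ⟨by simpa using hre.1, by simpa using hre.2.symm⟩

lemma bloch_norm_le (v : Fin 3 → ℝ)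
    (h : ∀ z : Fin 2 → ℂ, 0 ≤ star z ⬝ᵥ (blochState v) *ᵥ z) :
    ∑ i, v i ^ 2 ≤ 1 := by
  rw [Fin.sum_univ_three]
  have key : ∀ z : Fin 2 → ℂ, 0 ≤ (star z ⬝ᵥ (blochState v) *ᵥ z).re := fun z =>
    (Complex.le_def.mp (h z)).1
  -- basic bounds from coordinate vectors
  have h1 : 0 ≤ 1 + v 2 := by
    have := key ![1, 0]
    rw [blochState_eq] at this
    simp [dotProduct, Matrix.mulVec, Fin.sum_univ_two, Complex.add_re,
      Complex.div_re, Complex.mul_re] at this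
    linarith
  have h2 : 0 ≤ 1 - v 2 := by
    have := key ![0, 1]
    rw [blochState_eq] at this
    simp [dotProduct, Matrix.mulVec, Fin.sum_univ_two, Complex.add_re,
      Complex.div_re, Complex.mul_re] at this
    linarith
  -- the family z = (v0 - I v1, λ)
  have h3 : ∀ lam : ℝ, 0 ≤ (1 + v 2) / 2 * (v 0 ^ 2 + v 1 ^ 2)
      + (1 - v 2) / 2 * lam ^ 2 + lam * (v 0 ^ 2 + v 1 ^ 2) := by
    intro lam
    have := key ![(v 0 : ℂ) - I * v 1, (lam : ℂ)]
    rw [blochState_eq] at this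
    simp [dotProduct, Matrix.mulVec, Fin.sum_univ_two, Complex.add_re, Complex.sub_re,
      Complex.mul_re, Complex.mul_im, Complex.div_re, Complex.div_im, Complex.add_im,
      Complex.sub_im, Complex.normSq] at this
    nlinarith [this]
  set m : ℝ := v 0 ^ 2 + v 1 ^ 2 with hm
  have hm0 : 0 ≤ m := by positivity
  rcases eq_or_lt_of_le hm0 with hm1 | hm1
  · nlinarith [h1, h2]
  · by_cases hc : v 2 = 1
    · exfalso
      have := h3 (-2)
      rw [hc] at this
      nlinarith [hm1]
    · have hc1 : 0 < 1 - v 2 := lt_of_le_of_ne h2 (by intro hh; exact hc (by linarith))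
      set lam : ℝ := -m / (1 - v 2) with hlamdef
      have hlam : lam * (1 - v 2) = -m := by
        rw [hlamdef]; field_simp
      have h5 := h3 lam
      have key2 : 0 ≤ (1 + v 2) * m * (1 - v 2) - m ^ 2 := by
        have h6 : 0 ≤ ((1 + v 2) / 2 * m + (1 - v 2) / 2 * lam ^ 2 + lam * m) * (2 * (1 - v 2)) :=
          mul_nonneg h5 (by linarith)
        have h7 : ((1 + v 2) / 2 * m + (1 - v 2) / 2 * lam ^ 2 + lam * m) * (2 * (1 - v 2))
            = (1 + v 2) * m * (1 - v 2) - m ^ 2 := by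
          linear_combination (lam * (1 - v 2) + m) * hlam
        rwa [h7] at h6
      nlinarith [key2, hm1]

lemma E_entry (E : Matrix (Fin 2) (Fin 2) ℂ →ₗ[ℂ] Matrix (Fin 2) (Fin 2) ℂ)
    (A : Matrix (Fin 2) (Fin 2) ℂ) (i j : Fin 2) :
    E A i j = ∑ k : Fin 2, ∑ l : Fin 2, A k l * choi E (i, k) (j, l) := by
  have hA : A = ∑ k : Fin 2, ∑ l : Fin 2, A k l • Matrix.single k l (1 : ℂ) := by
    conv_lhs => rw [Matrix.matrix_eq_sum_single A]
    congr 1; funext k; congr 1; funext l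
    rw [Matrix.smul_single, smul_eq_mul, mul_one]
  conv_lhs => rw [hA]
  rw [map_sum]
  rw [Matrix.sum_apply]
  refine Finset.sum_congr rfl fun k _ => ?_
  rw [map_sum, Matrix.sum_apply]
  refine Finset.sum_congr rfl fun l _ => ?_
  rw [_root_.map_smul]
  simp [choi, Matrix.smul_apply, smul_eq_mul]

open scoped MatrixOrder Matrix.Norms.L2Operator in
lemma quad_nonneg (E : Matrix (Fin 2) (Fin 2) ℂ →ₗ[ℂ] Matrix (Fin 2) (Fin 2) ℂ)
    (hCP : (choi E).PosSemidef) (M : Matrix (Fin 2) (Fin 2) ℂ) (hM : M.PosSemidef)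
    (z : Fin 2 → ℂ) : 0 ≤ star z ⬝ᵥ (E M) *ᵥ z := by
  obtain ⟨B, rfl⟩ := CStarAlgebra.nonneg_iff_eq_star_mul_self.mp hM.nonneg
  have key : star z ⬝ᵥ (E (Bᴴ * B)) *ᵥ z
      = ∑ m : Fin 2, star (fun p : Fin 2 × Fin 2 => z p.1 * B m p.2) ⬝ᵥ
          (choi E) *ᵥ (fun p : Fin 2 × Fin 2 => z p.1 * B m p.2) := by
    simp only [dotProduct, Matrix.mulVec, Pi.star_apply, E_entry E (Bᴴ * B),
      Matrix.mul_apply, Matrix.conjTranspose_apply, Fintype.sum_prod_type,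
      Fin.sum_univ_two, star_mul', RCLike.star_def]
    ring
  rw [Matrix.star_eq_conjTranspose, key]
  exact Finset.sum_nonneg fun m _ => hCP.dotProduct_mulVec_nonneg _

lemma sum_sq_expand (a b : Fin 3 → ℝ) :
    ∑ i, (a i + b i) ^ 2 = a ⬝ᵥ a + 2 * (a ⬝ᵥ b) + b ⬝ᵥ b := by
  simp [dotProduct, Fin.sum_univ_three]
  ring

lemma eigen_stuff (T : Matrix (Fin 3) (Fin 3) ℝ) :
    ∃ (μ : ℝ) (u : Fin 3 → ℝ), u ⬝ᵥ u = 1 ∧ (Tᵀ * T) *ᵥ u = μ • u ∧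
      (∀ v : Fin 3 → ℝ, v ⬝ᵥ ((Tᵀ * T) *ᵥ v) ≤ μ * (v ⬝ᵥ v)) := by
  have hS : (Tᵀ * T).IsHermitian := by
    rw [Matrix.IsHermitian, Matrix.conjTranspose_eq_transpose_of_trivial]
    exact Matrix.isSymm_transpose_mul_self T
  obtain ⟨i0, -, hmax⟩ := Finset.exists_max_image Finset.univ hS.eigenvalues ⟨0, Finset.mem_univ 0⟩
  set μ := hS.eigenvalues i0 with hμ
  set u : EuclideanSpace ℝ (Fin 3) := hS.eigenvectorBasis i0 with hu
  refine ⟨μ, u, ?_, ?_, ?_⟩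
  · have h1 : ‖u‖ = 1 := hS.eigenvectorBasis.orthonormal.1 i0
    have h2 : ‖u‖ ^ 2 = 1 := by rw [h1]; norm_num
    rw [EuclideanSpace.norm_eq] at h2
    rw [Real.sq_sqrt (by positivity)] at h2
    simpa [dotProduct, Real.norm_eq_abs, sq_abs, pow_two] using h2
  · simpa using hS.mulVec_eigenvectorBasis i0
  · -- μ • 1 - S is PSD
    have hdiag : Matrix.PosSemidef (Matrix.diagonal (fun i => μ - hS.eigenvalues i)) := by
      rw [Matrix.posSemidef_diagonal_iff]
      intro i
      have := hmax i (Finset.mem_univ i)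
      linarith
    have hU := hS.eigenvectorUnitary.2
    have hpsd : Matrix.PosSemidef (μ • (1 : Matrix (Fin 3) (Fin 3) ℝ) - Tᵀ * T) := by
      have hST := hS.spectral_theorem
      have key : μ • (1 : Matrix (Fin 3) (Fin 3) ℝ) - Tᵀ * T =
          (hS.eigenvectorUnitary : Matrix (Fin 3) (Fin 3) ℝ) *
            Matrix.diagonal (fun i => μ - hS.eigenvalues i) *
            (hS.eigenvectorUnitary : Matrix (Fin 3) (Fin 3) ℝ)ᴴ := by
        have h1 : (hS.eigenvectorUnitary : Matrix (Fin 3) (Fin 3) ℝ) *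
            (star (hS.eigenvectorUnitary : Matrix (Fin 3) (Fin 3) ℝ)) = 1 :=
          Matrix.mem_unitaryGroup_iff.mp hS.eigenvectorUnitary.2
        have hdd : Matrix.diagonal (fun i => μ - hS.eigenvalues i) =
            μ • (1 : Matrix (Fin 3) (Fin 3) ℝ) - Matrix.diagonal (RCLike.ofReal ∘ hS.eigenvalues) := by
          ext i j
          by_cases h : i = j <;>
            simp [Matrix.diagonal_apply, h, Matrix.one_apply, Matrix.smul_apply]
        rw [hdd, Matrix.mul_sub, Matrix.sub_mul]
        rw [Matrix.mul_smul, Matrix.mul_one, Matrix.smul_mul]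
        rw [← Matrix.star_eq_conjTranspose, h1]
        conv_lhs => rw [hST, Unitary.conjStarAlgAut_apply]
      rw [key]
      exact hdiag.mul_mul_conjTranspose_same _
    intro v
    have h2 := hpsd.dotProduct_mulVec_nonneg v
    have : star v = v := by funext i; simp
    rw [this] at h2
    have h3 : v ⬝ᵥ ((μ • (1 : Matrix (Fin 3) (Fin 3) ℝ) - Tᵀ * T) *ᵥ v)
        = μ * (v ⬝ᵥ v) - v ⬝ᵥ ((Tᵀ * T) *ᵥ v) := by
      rw [Matrix.sub_mulVec, dotProduct_sub, Matrix.smul_mulVec, Matrix.one_mulVec,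
        dotProduct_smul]
      simp [smul_eq_mul]
    rw [h3] at h2
    linarith

lemma opnorm_sq (T : Matrix (Fin 3) (Fin 3) ℝ) (μ : ℝ) (u : Fin 3 → ℝ)
    (hu : u ⬝ᵥ u = 1)
    (hquad : ∀ v : Fin 3 → ℝ, v ⬝ᵥ ((Tᵀ * T) *ᵥ v) ≤ μ * (v ⬝ᵥ v)) :
    ((T *ᵥ u) ⬝ᵥ (T *ᵥ u) = μ) →
    ‖Matrix.toEuclideanCLM (𝕜 := ℝ) T‖ ^ 2 = μ := by
  intro hattain
  have hTT : ∀ a b : Fin 3 → ℝ, (T *ᵥ a) ⬝ᵥ (T *ᵥ b) = a ⬝ᵥ ((Tᵀ * T) *ᵥ b) := by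
    intro a b
    rw [← Matrix.mulVec_mulVec, Matrix.dotProduct_mulVec a, Matrix.vecMul_transpose]
  have hdot : ∀ v : Fin 3 → ℝ, 0 ≤ v ⬝ᵥ v := fun v =>
    Finset.sum_nonneg fun i _ => mul_self_nonneg _
  have hμ0 : 0 ≤ μ := by rw [← hattain]; exact hdot _
  set f := Matrix.toEuclideanCLM (𝕜 := ℝ) T with hf
  have happ : ∀ x : EuclideanSpace ℝ (Fin 3), (f x : Fin 3 → ℝ) = T *ᵥ (x : Fin 3 → ℝ) :=
    fun _ => rfl
  have hnormdot : ∀ x : EuclideanSpace ℝ (Fin 3), ‖x‖ = Real.sqrt ((x : Fin 3 → ℝ) ⬝ᵥ x) := by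
    intro x
    rw [EuclideanSpace.norm_eq]
    congr 1
    simp [dotProduct, Real.norm_eq_abs, sq_abs, pow_two]
  have hle : ‖f‖ ≤ Real.sqrt μ := by
    apply ContinuousLinearMap.opNorm_le_bound _ (Real.sqrt_nonneg μ)
    intro x
    rw [hnormdot, hnormdot, happ, hTT]
    calc Real.sqrt ((x : Fin 3 → ℝ) ⬝ᵥ ((Tᵀ * T) *ᵥ x)) ≤ Real.sqrt (μ * (x ⬝ᵥ x)) :=
          Real.sqrt_le_sqrt (hquad _)
      _ = Real.sqrt μ * Real.sqrt ((x : Fin 3 → ℝ) ⬝ᵥ x) := Real.sqrt_mul hμ0 _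
  have hge : Real.sqrt μ ≤ ‖f‖ := by
    have h1 := f.le_opNorm ((WithLp.equiv 2 (Fin 3 → ℝ)).symm u)
    rw [hnormdot, hnormdot, happ] at h1
    have h2 : ((WithLp.equiv 2 (Fin 3 → ℝ)).symm u : Fin 3 → ℝ) = u := rfl
    rw [h2, hu, hattain, Real.sqrt_one, mul_one] at h1
    exact h1
  have : ‖f‖ = Real.sqrt μ := le_antisymm hle hge
  rw [this, Real.sq_sqrt hμ0]

lemma core (t u : Fin 3 → ℝ) (T : Matrix (Fin 3) (Fin 3) ℝ) (μ : ℝ)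
    (hu : u ⬝ᵥ u = 1) (heig : (Tᵀ * T) *ᵥ u = μ • u)
    (hquad : ∀ v : Fin 3 → ℝ, v ⬝ᵥ ((Tᵀ * T) *ᵥ v) ≤ μ * (v ⬝ᵥ v))
    (hpos : ∀ v : Fin 3 → ℝ, v ⬝ᵥ v ≤ 1 →
      t ⬝ᵥ t + 2 * (t ⬝ᵥ (T *ᵥ v)) + (T *ᵥ v) ⬝ᵥ (T *ᵥ v) ≤ 1) :
    ∀ w : Fin 3 → ℝ,
      t ⬝ᵥ t + 2 * (t ⬝ᵥ (T *ᵥ w)) + (T *ᵥ w) ⬝ᵥ (T *ᵥ w) ≤ 1 - μ + w ⬝ᵥ w := by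
  have hTT : ∀ a b : Fin 3 → ℝ, (T *ᵥ a) ⬝ᵥ (T *ᵥ b) = a ⬝ᵥ ((Tᵀ * T) *ᵥ b) := by
    intro a b
    rw [← Matrix.mulVec_mulVec, Matrix.dotProduct_mulVec a, Matrix.vecMul_transpose]
  have hdot : ∀ v : Fin 3 → ℝ, 0 ≤ v ⬝ᵥ v := fun v =>
    Finset.sum_nonneg fun i _ => mul_self_nonneg _
  have hs2 : 0 ≤ t ⬝ᵥ t := hdot t
  have hTu : (T *ᵥ u) ⬝ᵥ (T *ᵥ u) = μ := by
    rw [hTT, heig, dotProduct_smul, smul_eq_mul, hu, mul_one]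
  have hμ0 : 0 ≤ μ := by rw [← hTu]; exact hdot _
  set c : ℝ := t ⬝ᵥ (T *ᵥ u) with hc
  -- μ + ‖t‖² ≤ 1
  have hμ1 : t ⬝ᵥ t + μ ≤ 1 := by
    have h1 := hpos u (le_of_eq hu)
    have h2 := hpos (-u) (by rw [neg_dotProduct, dotProduct_neg, hu]; norm_num)
    rw [Matrix.mulVec_neg, dotProduct_neg, neg_dotProduct,
      dotProduct_neg, neg_neg, hTu] at h2
    rw [hTu] at h1
    rw [← hc] at h1 h2
    linarith
  have h1μ : 0 ≤ 1 - μ := by linarith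
  intro w
  by_cases hw : w ⬝ᵥ w ≤ 1
  · -- inside the ball
    set γ : ℝ := u ⬝ᵥ w with hγ
    set p : Fin 3 → ℝ := w - γ • u with hp
    have hwp : w = p + γ • u := by rw [hp]; ring_nf -- may fail; fallback below
    have hpu : p ⬝ᵥ u = 0 := by
      rw [hp, sub_dotProduct, smul_dotProduct, hu, smul_eq_mul, mul_one,
        dotProduct_comm, hγ, sub_self]
    have hup : u ⬝ᵥ p = 0 := by rw [dotProduct_comm]; exact hpu
    have hppγ : p ⬝ᵥ p + γ ^ 2 = w ⬝ᵥ w := by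
      rw [hp]
      rw [sub_dotProduct, dotProduct_sub, dotProduct_sub,
        smul_dotProduct, dotProduct_smul, smul_dotProduct,
        dotProduct_smul, hu, dotProduct_comm w u, ← hγ]
      simp [smul_eq_mul]
      ring
    have hpp0 : 0 ≤ p ⬝ᵥ p := hdot p
    have hγsq : γ ^ 2 ≤ 1 - p ⬝ᵥ p := by nlinarith
    have hpp1 : 1 - p ⬝ᵥ p ≥ 0 := by nlinarith [sq_nonneg γ]
    set γ' : ℝ := if 0 ≤ c then Real.sqrt (1 - p ⬝ᵥ p) else -Real.sqrt (1 - p ⬝ᵥ p) with hγ'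
    have hγ'sq : γ' ^ 2 = 1 - p ⬝ᵥ p := by
      rw [hγ']; split_ifs
      · exact Real.sq_sqrt hpp1
      · rw [neg_sq]; exact Real.sq_sqrt hpp1
    have hcγ : c * γ ≤ c * γ' := by
      have habs : |γ| ≤ Real.sqrt (1 - p ⬝ᵥ p) := by
        rw [← Real.sqrt_sq_eq_abs]
        exact Real.sqrt_le_sqrt hγsq
      rw [hγ']; split_ifs with h
      · have : γ ≤ Real.sqrt (1 - p ⬝ᵥ p) := le_trans (le_abs_self γ) habs
        exact mul_le_mul_of_nonneg_left this h
      · have : -Real.sqrt (1 - p ⬝ᵥ p) ≤ γ := by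
          have := neg_abs_le γ
          linarith [neg_le_neg habs]
        nlinarith
    -- dot product identities
    have hTpu : (T *ᵥ p) ⬝ᵥ (T *ᵥ u) = 0 := by
      rw [hTT, heig, dotProduct_smul, smul_eq_mul, hpu, mul_zero]
    have key : ∀ g : ℝ, t ⬝ᵥ (T *ᵥ (p + g • u)) = t ⬝ᵥ (T *ᵥ p) + g * c ∧
        (T *ᵥ (p + g • u)) ⬝ᵥ (T *ᵥ (p + g • u))
          = (T *ᵥ p) ⬝ᵥ (T *ᵥ p) + g ^ 2 * μ := by
      intro g
      have hmv : T *ᵥ (p + g • u) = T *ᵥ p + g • (T *ᵥ u) := by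
        rw [Matrix.mulVec_add, Matrix.mulVec_smul]
      constructor
      · rw [hmv, dotProduct_add, dotProduct_smul, smul_eq_mul, hc]
      · rw [hmv, add_dotProduct, dotProduct_add, dotProduct_add,
          smul_dotProduct, dotProduct_smul, smul_dotProduct,
          dotProduct_smul, hTpu, dotProduct_comm (T *ᵥ u) (T *ᵥ p), hTpu, hTu]
        simp [smul_eq_mul]
        ring
    have hu'1 : (p + γ' • u) ⬝ᵥ (p + γ' • u) ≤ 1 := by
      rw [add_dotProduct, dotProduct_add, dotProduct_add,
        smul_dotProduct, dotProduct_smul, smul_dotProduct,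
        dotProduct_smul, hpu, hup, hu]
      simp only [smul_eq_mul]
      nlinarith [hγ'sq]
    have hcon := hpos (p + γ' • u) hu'1
    obtain ⟨k1, k2⟩ := key γ'
    rw [k1, k2] at hcon
    obtain ⟨k3, k4⟩ := key γ
    rw [← hwp] at k3 k4
    rw [k3, k4, ← hppγ]
    nlinarith [mul_nonneg h1μ (add_nonneg hpp0 (sq_nonneg γ))]
  · -- outside the ball
    push_neg at hw
    set R : ℝ := Real.sqrt (w ⬝ᵥ w) with hR
    have hR2 : R ^ 2 = w ⬝ᵥ w := Real.sq_sqrt (hdot w)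
    have hR1 : 1 ≤ R := by nlinarith [Real.sqrt_nonneg (w ⬝ᵥ w)]
    have hR0 : 0 < R := by linarith
    set v : Fin 3 → ℝ := R⁻¹ • w with hv
    have hwv : w = R • v := by
      rw [hv, smul_smul, mul_inv_cancel₀ (ne_of_gt hR0), one_smul]
    have hvv : v ⬝ᵥ v = 1 := by
      rw [hv, smul_dotProduct, dotProduct_smul, smul_eq_mul, smul_eq_mul,
        ← hR2]
      field_simp
    have hcon := hpos v (le_of_eq hvv)
    have he : (T *ᵥ v) ⬝ᵥ (T *ᵥ v) ≤ μ := by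
      have := hquad v
      rw [← hTT, hvv, mul_one] at this
      exact this
    have he0 : 0 ≤ (T *ᵥ v) ⬝ᵥ (T *ᵥ v) := hdot _
    have hTw : T *ᵥ w = R • (T *ᵥ v) := by rw [hwv, Matrix.mulVec_smul]
    rw [hTw, dotProduct_smul, smul_dotProduct, dotProduct_smul,
      smul_eq_mul, smul_eq_mul, smul_eq_mul, ← hR2]
    nlinarith [mul_nonneg (sub_nonneg.mpr hR1) (sub_nonneg.mpr he),
      mul_nonneg (mul_nonneg (sub_nonneg.mpr hR1) (sub_nonneg.mpr he)) (le_of_lt hR0),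
      mul_nonneg h1μ (sq_nonneg (R - 1)),
      mul_nonneg (mul_nonneg h1μ hR0.le) (sub_nonneg.mpr hR1),
      mul_nonneg hs2 (sub_nonneg.mpr hR1)]

/-- If `(t, T)` is the Bloch representation of a qubit CPTP channel,
then for every `w ∈ ℝ³`, `‖t + Tw‖² ≤ 1 − ‖T‖² + ‖w‖²`. -/
theorem bloch_image_norm_sq_le (E : Matrix (Fin 2) (Fin 2) ℂ →ₗ[ℂ] Matrix (Fin 2) (Fin 2) ℂ)
    (hTP : ∀ A, (E A).trace = A.trace)
    (hCP : (choi E).PosSemidef)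
    (t : Fin 3 → ℝ) (T : Matrix (Fin 3) (Fin 3) ℝ)
    (hBloch : ∀ w : Fin 3 → ℝ,
      E (blochState w) = blochState fun i => t i + T.mulVec w i) :
    ∀ w : Fin 3 → ℝ,
      ∑ i, (t i + T.mulVec w i) ^ 2 ≤ 1 - opNorm3 T ^ 2 + ∑ i, w i ^ 2 := by
  have hdotsum : ∀ v : Fin 3 → ℝ, v ⬝ᵥ v = ∑ i, v i ^ 2 := by
    intro v; simp [dotProduct, pow_two]
  obtain ⟨μ, u, hu, heig, hquad⟩ := eigen_stuff T
  have hTu : (T *ᵥ u) ⬝ᵥ (T *ᵥ u) = μ := by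
    have hTT : (T *ᵥ u) ⬝ᵥ (T *ᵥ u) = u ⬝ᵥ ((Tᵀ * T) *ᵥ u) := by
      rw [← Matrix.mulVec_mulVec, Matrix.dotProduct_mulVec u, Matrix.vecMul_transpose]
    rw [hTT, heig, dotProduct_smul, smul_eq_mul, hu, mul_one]
  have hop : opNorm3 T ^ 2 = μ := opnorm_sq T μ u hu hquad hTu
  have hpos : ∀ v : Fin 3 → ℝ, v ⬝ᵥ v ≤ 1 →
      t ⬝ᵥ t + 2 * (t ⬝ᵥ (T *ᵥ v)) + (T *ᵥ v) ⬝ᵥ (T *ᵥ v) ≤ 1 := by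
    intro v hv
    have h1 : ∑ i, v i ^ 2 ≤ 1 := by rwa [← hdotsum]
    have h2 := bloch_norm_le (fun i => t i + T.mulVec v i) (fun z => by
      have hq := quad_nonneg E hCP _ (blochState_psd v h1) z
      rwa [hBloch v] at hq)
    rw [← sum_sq_expand]
    exact h2
  intro w
  have hcore := core t u T μ hu heig hquad hpos w
  rw [sum_sq_expand, hop, ← hdotsum w]
  exact hcore

end
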